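/- For all real numbers α, γ > 0 with α + γ > d, there exists a constant C = C(α, γ) < ∞ such that for all nonzero k ∈ ℤ^d, the sum over pairs of nonzero m, n ∈ ℤ^d with m + n = k of 1/(|m|^α |n|^γ) is at most C(1+|k|)^{-β} if α ≠ d and γ ≠ d, and at most C(1+|k|)^{-β} log(1+|k|) if α = d or γ = d, where β = min{α, γ, α + γ - d}. -/

import Mathlib

open scoped ENNReal

/-- Euclidean norm of a lattice point in `ℤ^d`. -/
noncomputable def latNorm {d : ℕ} (m : Fin d → ℤ) : ℝ :=
  Real.sqrt (∑ i, ((m i : ℝ))^2)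

section Helpers
open Finset Real

-- step inequality for tail sums: t > 1
lemma step_tail {t : ℝ} (ht : 1 < t) {x : ℝ} (hx : 1 ≤ x) :
    (t - 1) * (x + 1) ^ (-t) ≤ x ^ (1 - t) - (x + 1) ^ (1 - t) := by
  have hx0 : 0 < x := lt_of_lt_of_le one_pos hx
  have hx1 : 0 < x + 1 := by linarith
  have hlog : 1 / (x + 1) ≤ Real.log ((x + 1) / x) := by
    have h1 : Real.log (x / (x + 1)) ≤ x / (x + 1) - 1 :=
      Real.log_le_sub_one_of_pos (by positivity)
    have h2 : Real.log ((x + 1) / x) = - Real.log (x / (x + 1)) := by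
      rw [← Real.log_inv]; congr 1; field_simp
    have h3 : x / (x + 1) - 1 = -(1 / (x + 1)) := by field_simp; ring
    rw [h2]; linarith [h1.trans_eq h3]
  have hkey : 1 + (t - 1) / (x + 1) ≤ ((x + 1) / x) ^ (t - 1) := by
    have hexp : Real.exp (Real.log ((x + 1) / x) * (t - 1)) = ((x + 1) / x) ^ (t - 1) :=
      (Real.rpow_def_of_pos (by positivity) _).symm
    have h3 : (t - 1) * (1 / (x + 1)) ≤ (t - 1) * Real.log ((x + 1) / x) :=
      mul_le_mul_of_nonneg_left hlog (by linarith)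
    calc 1 + (t - 1) / (x + 1) = (t - 1) * (1 / (x + 1)) + 1 := by ring
      _ ≤ Real.log ((x + 1) / x) * (t - 1) + 1 := by nlinarith
      _ ≤ Real.exp (Real.log ((x + 1) / x) * (t - 1)) := Real.add_one_le_exp _
      _ = _ := hexp
  have e1 : ((x + 1) / x) ^ (t - 1) = (x + 1) ^ (t - 1) * x ^ (1 - t) := by
    rw [Real.div_rpow (by positivity) hx0.le, div_eq_mul_inv, ← Real.rpow_neg hx0.le, neg_sub]
  have e2 : (x + 1) ^ (t - 1) * (x + 1) ^ (1 - t) = 1 := by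
    rw [← Real.rpow_add hx1]; norm_num
  have e3 : (x + 1) ^ (1 - t) / (x + 1) = (x + 1) ^ (-t) := by
    rw [div_eq_mul_inv, ← Real.rpow_neg_one (x + 1), ← Real.rpow_add hx1]; ring_nf
  have hmul := mul_le_mul_of_nonneg_right hkey (Real.rpow_nonneg hx1.le (1 - t))
  rw [e1] at hmul
  have hrhs : (x + 1) ^ (t - 1) * x ^ (1 - t) * (x + 1) ^ (1 - t) = x ^ (1 - t) := by
    calc (x + 1) ^ (t - 1) * x ^ (1 - t) * (x + 1) ^ (1 - t)
        = x ^ (1 - t) * ((x + 1) ^ (t - 1) * (x + 1) ^ (1 - t)) := by ring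
      _ = x ^ (1 - t) := by rw [e2, mul_one]
  have hlhs : (1 + (t - 1) / (x + 1)) * (x + 1) ^ (1 - t)
      = (x + 1) ^ (1 - t) + (t - 1) * (x + 1) ^ (-t) := by
    rw [add_mul, one_mul, div_mul_eq_mul_div, mul_div_assoc, e3]
  rw [hrhs, hlhs] at hmul
  linarith

-- step inequality for head sums: q ∈ (0,1]
lemma step_head {q : ℝ} (hq0 : 0 < q) (hq1 : q ≤ 1) {x : ℝ} (hx : 1 ≤ x) :
    q / 2 * x ^ (q - 1) ≤ x ^ q - (x - 1) ^ q := by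
  have hx0 : 0 < x := lt_of_lt_of_le one_pos hx
  have hq2 : q / x ≤ 1 := by
    rw [div_le_one hx0]; linarith
  -- (x-1)^q ≤ x^q * exp (-(q/x))
  have hmain : (x - 1) ^ q ≤ x ^ q * Real.exp (-(q / x)) := by
    rcases eq_or_lt_of_le hx with h | h
    · rw [← h]
      have : (1:ℝ) - 1 = 0 := by norm_num
      rw [this, Real.zero_rpow (ne_of_gt hq0), Real.one_rpow]
      positivity
    · have hx10 : 0 < x - 1 := by linarith
      have e1 : (x - 1) ^ q = x ^ q * ((x - 1) / x) ^ q := by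
        rw [Real.div_rpow hx10.le hx0.le, mul_div_cancel₀]
        positivity
      rw [e1]
      have hlog : Real.log ((x - 1) / x) ≤ -(1 / x) := by
        have := Real.log_le_sub_one_of_pos (x := (x - 1) / x) (by positivity)
        have h3 : (x - 1) / x - 1 = -(1 / x) := by field_simp; ring
        linarith [this.trans_eq h3]
      have e2 : ((x - 1) / x) ^ q = Real.exp (Real.log ((x - 1) / x) * q) :=
        Real.rpow_def_of_pos (by positivity) _
      have : Real.log ((x - 1) / x) * q ≤ -(q / x) := by
        have := mul_le_mul_of_nonneg_right hlog hq0.le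
        calc Real.log ((x - 1) / x) * q ≤ -(1 / x) * q := this
          _ = -(q / x) := by ring
      have := Real.exp_le_exp.mpr this
      rw [e2]
      exact mul_le_mul_of_nonneg_left this (Real.rpow_nonneg hx0.le q)
  -- exp(-(q/x)) ≤ 1 - (q/x)/2
  have hexp2 : Real.exp (-(q / x)) ≤ 1 - q / (2 * x) := by
    have h1 : q / x + 1 ≤ Real.exp (q / x) := Real.add_one_le_exp _
    have h2 : Real.exp (-(q / x)) = (Real.exp (q / x))⁻¹ := by
      rw [Real.exp_neg]
    rw [h2]
    have hqx : 0 < q / x := by positivity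
    have h3 : (Real.exp (q / x))⁻¹ ≤ (q / x + 1)⁻¹ := inv_anti₀ (by positivity) h1
    apply h3.trans
    rw [inv_le_iff_one_le_mul₀ (by positivity)]
    have he : (1 - q / (2 * x)) * (q / x + 1) = 1 + q / (2 * x) * (1 - q / x) := by
      field_simp; ring
    have h5 : 0 ≤ q / (2 * x) := by positivity
    nlinarith [hq2]
  have h4 : x ^ q * Real.exp (-(q / x)) ≤ x ^ q * (1 - q / (2 * x)) :=
    mul_le_mul_of_nonneg_left hexp2 (Real.rpow_nonneg hx0.le q)
  have e5 : x ^ q * (1 - q / (2 * x)) = x ^ q - q / 2 * (x ^ q / x) := by ring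
  have e6 : x ^ q / x = x ^ (q - 1) := by
    rw [div_eq_mul_inv, ← Real.rpow_neg_one x, ← Real.rpow_add hx0]; ring_nf
  have := hmain.trans (h4.trans_eq e5)
  rw [e6] at this
  linarith

lemma tail_aux {t : ℝ} (ht : 1 < t) (J : ℕ) (hJ : 1 ≤ J) (n : ℕ) :
    ∑ j ∈ Finset.Icc (J + 1) (J + n), ((j : ℝ)) ^ (-t)
      ≤ ((J : ℝ) ^ (1 - t) - ((J + n : ℕ) : ℝ) ^ (1 - t)) / (t - 1) := by
  induction n with
  | zero => simp
  | succ n ih =>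
    rw [show J + (n + 1) = (J + n) + 1 from rfl,
      Finset.sum_Icc_succ_top (by omega : J + 1 ≤ J + n + 1)]
    have hx : (1 : ℝ) ≤ ((J + n : ℕ) : ℝ) := by
      have : (1 : ℕ) ≤ J + n := by omega
      exact_mod_cast this
    have hstep := step_tail ht hx
    have ht1 : (0 : ℝ) < t - 1 := by linarith
    have h2 : (((J + n + 1 : ℕ)) : ℝ) ^ (-t)
        ≤ (((J + n : ℕ) : ℝ) ^ (1 - t) - (((J + n + 1 : ℕ)) : ℝ) ^ (1 - t)) / (t - 1) := by
      rw [le_div_iff₀ ht1]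
      push_cast
      push_cast at hstep
      nlinarith [hstep]
    calc _ ≤ ((J : ℝ) ^ (1 - t) - ((J + n : ℕ) : ℝ) ^ (1 - t)) / (t - 1)
          + (((J + n + 1 : ℕ)) : ℝ) ^ (-t) := by gcongr
    _ ≤ ((J : ℝ) ^ (1 - t) - ((J + n : ℕ) : ℝ) ^ (1 - t)) / (t - 1)
          + (((J + n : ℕ) : ℝ) ^ (1 - t) - (((J + n + 1 : ℕ)) : ℝ) ^ (1 - t)) / (t - 1) := by
        gcongr
    _ = ((J : ℝ) ^ (1 - t) - ((J + n + 1 : ℕ) : ℝ) ^ (1 - t)) / (t - 1) := by ring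

lemma tail_sum {t : ℝ} (ht : 1 < t) (J : ℕ) (hJ : 1 ≤ J) (N : ℕ) :
    ∑ j ∈ Finset.Icc J N, ((j : ℝ)) ^ (-t) ≤ (1 + 1 / (t - 1)) * (J : ℝ) ^ (1 - t) := by
  have hJR : (1 : ℝ) ≤ (J : ℝ) := by exact_mod_cast hJ
  have hpos : (0 : ℝ) ≤ (1 + 1 / (t - 1)) * (J : ℝ) ^ (1 - t) := by
    have : (0:ℝ) < t - 1 := by linarith
    positivity
  rcases le_or_gt J N with h | h
  · obtain ⟨n, rfl⟩ := Nat.exists_eq_add_of_le h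
    have hins : Finset.Icc J (J + n) = insert J (Finset.Icc (J + 1) (J + n)) := by
      ext x; simp; omega
    rw [hins, Finset.sum_insert (by simp)]
    have h1 : (J : ℝ) ^ (-t) ≤ (J : ℝ) ^ (1 - t) :=
      Real.rpow_le_rpow_of_exponent_le hJR (by linarith)
    have h2 := tail_aux ht J hJ n
    have h3 : ((J : ℝ) ^ (1 - t) - ((J + n : ℕ) : ℝ) ^ (1 - t)) / (t - 1)
        ≤ (J : ℝ) ^ (1 - t) / (t - 1) := by
      have ht1 : (0:ℝ) < t - 1 := by linarith
      have hn : (0:ℝ) ≤ ((J + n : ℕ) : ℝ) ^ (1 - t) := Real.rpow_nonneg (by positivity) _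
      gcongr
      linarith
    calc _ ≤ (J:ℝ) ^ (1-t) + (J : ℝ) ^ (1 - t) / (t - 1) := by
          have := h2.trans h3; linarith
      _ = (1 + 1 / (t - 1)) * (J : ℝ) ^ (1 - t) := by ring
  · rw [Finset.Icc_eq_empty (by omega)]; simpa using hpos

lemma head_sum_mid {q : ℝ} (hq0 : 0 < q) (hq1 : q ≤ 1) (L : ℕ) :
    ∑ j ∈ Finset.Icc 1 L, ((j : ℝ)) ^ (q - 1) ≤ 2 / q * (L : ℝ) ^ q := by
  induction L with
  | zero => simp [Real.zero_rpow (ne_of_gt hq0)]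
  | succ L ih =>
    rw [Finset.sum_Icc_succ_top (by omega : 1 ≤ L + 1)]
    have hx : (1 : ℝ) ≤ ((L : ℝ) + 1) := by have : (0:ℝ) ≤ (L:ℝ) := Nat.cast_nonneg L; linarith
    have hstep := step_head hq0 hq1 hx
    have h2 : (((L + 1 : ℕ)) : ℝ) ^ (q - 1) ≤ 2 / q * (((L:ℝ) + 1) ^ q - (L : ℝ) ^ q) := by
      push_cast
      rw [show (L:ℝ) + 1 - 1 = (L:ℝ) by ring] at hstep
      rw [div_mul_eq_mul_div, le_div_iff₀ hq0]
      nlinarith [hstep]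
    push_cast
    push_cast at ih h2
    linarith

lemma head_sum_one (L : ℕ) :
    ∑ j ∈ Finset.Icc 1 L, ((j : ℝ)) ^ (-1 : ℝ) ≤ 1 + Real.log L := by
  induction L with
  | zero => simp
  | succ L ih =>
    rcases Nat.eq_zero_or_pos L with rfl | hL
    · norm_num
    rw [Finset.sum_Icc_succ_top (by omega : 1 ≤ L + 1)]
    have hL1 : (0:ℝ) < (L : ℝ) := by exact_mod_cast hL
    have hlog : (((L + 1 : ℕ)) : ℝ) ^ (-1 : ℝ) ≤ Real.log (L + 1) - Real.log L := by
      have h1 := Real.log_le_sub_one_of_pos (x := (L : ℝ) / ((L:ℝ) + 1)) (by positivity)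
      have h2 : Real.log ((L:ℝ) / ((L:ℝ)+1)) = Real.log L - Real.log ((L:ℝ)+1) :=
        Real.log_div (ne_of_gt hL1) (by positivity)
      have h3 : (L:ℝ) / ((L:ℝ)+1) - 1 = -(1/((L:ℝ)+1)) := by field_simp; ring
      have h4 : (((L + 1 : ℕ)) : ℝ) ^ (-1 : ℝ) = 1 / ((L:ℝ)+1) := by
        rw [Real.rpow_neg_one]; push_cast; rw [one_div]
      rw [h4]; rw [h2, h3] at h1; linarith
    push_cast at ih hlog ⊢
    linarith

lemma head_sum_big {r : ℝ} (hr : 0 ≤ r) (L : ℕ) :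
    ∑ j ∈ Finset.Icc 1 L, ((j : ℝ)) ^ r ≤ (L : ℝ) ^ (r + 1) := by
  have h1 : ∀ j ∈ Finset.Icc 1 L, ((j:ℝ)) ^ r ≤ (L : ℝ) ^ r := by
    intro j hj
    simp only [Finset.mem_Icc] at hj
    exact Real.rpow_le_rpow (by positivity) (by exact_mod_cast hj.2) hr
  calc ∑ j ∈ Finset.Icc 1 L, ((j : ℝ)) ^ r ≤ (Finset.Icc 1 L).card • (L:ℝ) ^ r :=
        Finset.sum_le_card_nsmul _ _ _ h1
    _ = (L : ℝ) * (L:ℝ) ^ r := by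
        rw [Nat.card_Icc]; simp [nsmul_eq_mul]
    _ = (L : ℝ) ^ (r + 1) := by
        rcases Nat.eq_zero_or_pos L with rfl | hL
        · simp [Real.zero_rpow (by positivity : (0:ℝ) < r+1).ne']
        · have : (0:ℝ) < L := by exact_mod_cast hL
          rw [Real.rpow_add this, Real.rpow_one]; ring



namespace LatConv

variable {d : ℕ}

noncomputable def toE (m : Fin d → ℤ) : EuclideanSpace ℝ (Fin d) := WithLp.toLp 2 (fun i => (m i : ℝ))

lemma latNorm_eq (m : Fin d → ℤ) : latNorm m = ‖toE m‖ := by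
  rw [EuclideanSpace.norm_eq, latNorm]
  congr 1
  apply Finset.sum_congr rfl
  intro i _
  rw [Real.norm_eq_abs, sq_abs]
  rfl

lemma latNorm_nonneg (m : Fin d → ℤ) : 0 ≤ latNorm m := Real.sqrt_nonneg _

lemma latNorm_zero : latNorm (0 : Fin d → ℤ) = 0 := by
  simp [latNorm]

lemma latNorm_triangle (m n : Fin d → ℤ) : latNorm (m + n) ≤ latNorm m + latNorm n := by
  rw [latNorm_eq, latNorm_eq, latNorm_eq]
  have : toE (m + n) = toE m + toE n := by
    ext i
    show ((m i + n i : ℤ) : ℝ) = (m i : ℝ) + (n i : ℝ)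
    push_cast; ring
  rw [this]
  exact norm_add_le _ _

/-- sup norm (as a natural number) -/
def supN (m : Fin d → ℤ) : ℕ := Finset.univ.sup fun i => (m i).natAbs

lemma supN_le_latNorm (m : Fin d → ℤ) : (supN m : ℝ) ≤ latNorm m := by
  rcases Nat.eq_zero_or_pos (supN m) with h | h
  · rw [h]; exact_mod_cast latNorm_nonneg m
  · have hne : (Finset.univ : Finset (Fin d)).Nonempty := by
      by_contra hc
      rw [Finset.not_nonempty_iff_eq_empty] at hc
      simp [supN, hc] at h
    obtain ⟨i, _, hi⟩ := Finset.exists_mem_eq_sup _ hne fun i => (m i).natAbs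
    rw [latNorm, show (supN m : ℝ) = Real.sqrt ((supN m : ℝ)^2) from
      (Real.sqrt_sq (by positivity)).symm]
    apply Real.sqrt_le_sqrt
    have h2 : ((supN m : ℝ))^2 = ((m i : ℝ))^2 := by
      rw [supN, hi]
      rw [Nat.cast_natAbs]; push_cast; rw [sq_abs]
    rw [h2]
    exact Finset.single_le_sum (f := fun j => ((m j : ℝ))^2) (fun j _ => by positivity)
      (Finset.mem_univ i)

lemma one_le_supN {m : Fin d → ℤ} (hm : m ≠ 0) : 1 ≤ supN m := by
  rcases Function.ne_iff.mp hm with ⟨i, hi⟩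
  have : 1 ≤ (m i).natAbs := by
    simp only [Pi.zero_apply] at hi
    omega
  exact le_trans this (Finset.le_sup (f := fun i => (m i).natAbs) (Finset.mem_univ i))

lemma one_le_latNorm {m : Fin d → ℤ} (hm : m ≠ 0) : 1 ≤ latNorm m := by
  have h1 := one_le_supN hm
  have := supN_le_latNorm m
  have : (1:ℝ) ≤ (supN m : ℝ) := by exact_mod_cast h1
  linarith [supN_le_latNorm m]

/-- the box of sup-norm radius `j` -/
noncomputable def box (d j : ℕ) : Finset (Fin d → ℤ) :=
  Fintype.piFinset fun _ => Finset.Icc (-(j:ℤ)) (j:ℤ)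

lemma card_box (j : ℕ) : (box d j).card = (2*j+1)^d := by
  rw [box, Fintype.card_piFinset]
  simp only [Int.card_Icc]
  rw [Finset.prod_const, Finset.card_univ, Fintype.card_fin]
  congr 1
  omega

lemma mem_box {m : Fin d → ℤ} {j : ℕ} : m ∈ box d j ↔ supN m ≤ j := by
  rw [box, Fintype.mem_piFinset, supN]
  simp only [Finset.mem_Icc, Finset.sup_le_iff, Finset.mem_univ, true_implies]
  constructor
  · intro h i; have := h i; omega
  · intro h i; have := h i; omega

lemma card_shell_le {j : ℕ} (hj : 1 ≤ j) (S : Finset (Fin d → ℤ)) :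
    ((S.filter fun m => supN m = j).card : ℝ) ≤ 2 * d * (3*(j:ℝ))^(d-1) := by
  have hsub : S.filter (fun m => supN m = j) ⊆ box d j \ box d (j-1) := by
    intro m hm
    simp only [Finset.mem_filter] at hm
    rw [Finset.mem_sdiff, mem_box, mem_box]
    omega
  have hboxsub : box d (j-1) ⊆ box d j := by
    intro m hm; rw [mem_box] at *; omega
  have hcard : (S.filter (fun m => supN m = j)).card ≤ (2*j+1)^d - (2*(j-1)+1)^d := by
    calc _ ≤ (box d j \ box d (j-1)).card := Finset.card_le_card hsub
      _ = (box d j).card - (box d (j-1)).card := Finset.card_sdiff_of_subset hboxsub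
      _ = (2*j+1)^d - (2*(j-1)+1)^d := by rw [card_box, card_box]
  have hcard2 : ((S.filter (fun m => supN m = j)).card : ℝ)
      ≤ ((2*j+1:ℕ):ℝ)^d - ((2*(j-1)+1:ℕ):ℝ)^d := by
    have hle : (2*(j-1)+1)^d ≤ (2*j+1)^d := Nat.pow_le_pow_left (by omega) d
    have := hcard
    have h2 : (((2*j+1)^d - (2*(j-1)+1)^d : ℕ) : ℝ)
        = ((2*j+1:ℕ):ℝ)^d - ((2*(j-1)+1:ℕ):ℝ)^d := by
      rw [Nat.cast_sub hle]; push_cast; ring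
    calc ((S.filter (fun m => supN m = j)).card : ℝ)
        ≤ (((2*j+1)^d - (2*(j-1)+1)^d : ℕ) : ℝ) := by exact_mod_cast hcard
      _ = _ := h2
  apply hcard2.trans
  -- a^d - b^d ≤ d*(a-b)*a^(d-1) with a-b = 2
  set a : ℝ := ((2*j+1:ℕ):ℝ) with ha
  set b : ℝ := ((2*(j-1)+1:ℕ):ℝ) with hb
  have hab : a - b = 2 := by rw [ha, hb]; push_cast [Nat.cast_sub hj]; ring
  have hb0 : 0 ≤ b := Nat.cast_nonneg _
  have hba : b ≤ a := by linarith
  have hgeom : (∑ i ∈ Finset.range d, a ^ i * b ^ (d - 1 - i)) * (a - b) = a ^ d - b ^ d :=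
    geom_sum₂_mul a b d
  have hterm : ∀ i ∈ Finset.range d, a ^ i * b ^ (d - 1 - i) ≤ a^(d-1) := by
    intro i hi
    rw [Finset.mem_range] at hi
    calc a ^ i * b ^ (d - 1 - i) ≤ a ^ i * a ^ (d - 1 - i) := by
          apply mul_le_mul_of_nonneg_left (pow_le_pow_left₀ hb0 hba _) (by positivity)
      _ = a ^ (i + (d - 1 - i)) := by rw [pow_add]
      _ = a ^ (d-1) := by congr 1; omega
  have hsum : (∑ i ∈ Finset.range d, a ^ i * b ^ (d - 1 - i)) ≤ d * a^(d-1) := by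
    calc _ ≤ ∑ i ∈ Finset.range d, a^(d-1) := Finset.sum_le_sum hterm
      _ = d * a^(d-1) := by rw [Finset.sum_const, Finset.card_range, nsmul_eq_mul]
  have ha3 : a ≤ 3 * j := by rw [ha]; push_cast; have : (1:ℝ) ≤ (j:ℝ) := by exact_mod_cast hj
                             linarith
  have ha0 : 0 ≤ a := Nat.cast_nonneg _
  calc a^d - b^d = (∑ i ∈ Finset.range d, a ^ i * b ^ (d - 1 - i)) * 2 := by
        rw [← hab, hgeom]
    _ ≤ (d * a^(d-1)) * 2 := by linarith [hsum]
    _ ≤ (d * (3*(j:ℝ))^(d-1)) * 2 := by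
        have : a^(d-1) ≤ (3*(j:ℝ))^(d-1) := pow_le_pow_left₀ ha0 ha3 _
        have hd0 : (0:ℝ) ≤ d := Nat.cast_nonneg _
        nlinarith
    _ = 2 * d * (3*(j:ℝ))^(d-1) := by ring


noncomputable def phi (d : ℕ) (s t K : ℝ) (m : Fin d → ℤ) : ℝ :=
  if m = 0 then 0 else 1 / (latNorm m ^ s * (max (latNorm m) (K/2)) ^ t)

noncomputable def psi (s t K : ℝ) (j : ℕ) : ℝ :=
  if j = 0 then 0 else ((j:ℝ)) ^ (-s) * (max ((j:ℝ)) (K/2)) ^ (-t)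

lemma phi_nonneg (s t K : ℝ) (m : Fin d → ℤ) : 0 ≤ phi d s t K m := by
  rw [phi]; split
  · exact le_refl 0
  · have h1 : (0:ℝ) ≤ latNorm m ^ s := Real.rpow_nonneg (latNorm_nonneg m) _
    have h2 : (0:ℝ) ≤ (max (latNorm m) (K/2)) ^ t :=
      Real.rpow_nonneg (le_max_of_le_left (latNorm_nonneg m)) _
    positivity

lemma psi_nonneg (s t K : ℝ) (j : ℕ) : 0 ≤ psi s t K j := by
  rw [psi]; split
  · exact le_refl 0
  · have h1 : (0:ℝ) ≤ ((j:ℝ)) ^ (-s) := Real.rpow_nonneg (Nat.cast_nonneg _) _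
    have h2 : (0:ℝ) ≤ (max ((j:ℝ)) (K/2)) ^ (-t) := Real.rpow_nonneg (le_max_of_le_left (Nat.cast_nonneg _)) _
    positivity

lemma phi_le_psi {s t : ℝ} (hs : 0 < s) (ht : 0 < t) {K : ℝ} (hK : 0 < K) (m : Fin d → ℤ) :
    phi d s t K m ≤ psi s t K (supN m) := by
  rcases eq_or_ne m 0 with rfl | hm
  · rw [phi, if_pos rfl]; exact psi_nonneg s t K _
  have hj := one_le_supN hm
  have hj' : supN m ≠ 0 := by omega
  rw [phi, if_neg hm, psi, if_neg hj']
  set j : ℝ := ((supN m : ℕ) : ℝ) with hjdef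
  have hj1 : (1:ℝ) ≤ j := by rw [hjdef]; exact_mod_cast hj
  have hja : j ≤ latNorm m := supN_le_latNorm m
  have hj0 : (0:ℝ) < j := by linarith
  have ha0 : (0:ℝ) < latNorm m := by linarith
  have hmax0 : (0:ℝ) < max j (K/2) := lt_max_of_lt_left hj0
  have hmaxle : max j (K/2) ≤ max (latNorm m) (K/2) := max_le_max hja (le_refl _)
  have hd1 : j ^ s ≤ latNorm m ^ s := Real.rpow_le_rpow hj0.le hja hs.le
  have hd2 : (max j (K/2)) ^ t ≤ (max (latNorm m) (K/2)) ^ t :=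
    Real.rpow_le_rpow hmax0.le hmaxle ht.le
  have hden : j ^ s * (max j (K/2)) ^ t ≤ latNorm m ^ s * (max (latNorm m) (K/2)) ^ t := by
    apply mul_le_mul hd1 hd2 (Real.rpow_nonneg hmax0.le _) (Real.rpow_nonneg ha0.le _)
  have hpos : (0:ℝ) < j ^ s * (max j (K/2)) ^ t := by
    have := Real.rpow_pos_of_pos hj0 s
    have := Real.rpow_pos_of_pos hmax0 t
    positivity
  rw [Real.rpow_neg hj0.le, Real.rpow_neg hmax0.le, ← one_div, ← one_div,
    div_mul_div_comm, one_mul]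
  exact one_div_le_one_div_of_le hpos hden

lemma core_skeleton (hd : 1 ≤ d) {s t : ℝ} (hs : 0 < s) (ht : 0 < t) {K : ℝ} (hK : 1 ≤ K)
    (S : Finset (Fin d → ℤ)) :
    ∃ N : ℕ, ⌊K/2⌋₊ ≤ N ∧
      ∑ m ∈ S, phi d s t K m ≤
        (2*d*3^(d-1) : ℝ) * ((K/2) ^ (-t) * ∑ j ∈ Finset.Icc 1 ⌊K/2⌋₊, ((j:ℝ)) ^ ((d:ℝ)-1-s)
          + ∑ j ∈ Finset.Icc (⌊K/2⌋₊+1) N, ((j:ℝ)) ^ ((d:ℝ)-1-s-t)) := by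
  classical
  set L : ℕ := ⌊K/2⌋₊ with hL
  set N : ℕ := max L (S.sup supN) with hN
  refine ⟨N, le_max_left _ _, ?_⟩
  have hK2 : (0:ℝ) < K/2 := by linarith
  -- step 1: pointwise
  have step1 : ∑ m ∈ S, phi d s t K m ≤ ∑ m ∈ S, psi s t K (supN m) :=
    Finset.sum_le_sum fun m _ => phi_le_psi hs ht (by linarith) m
  -- step 2: group by supN
  rw [Finset.sum_comp (psi s t K) supN] at step1
  -- step 3: bound multiplicities
  set ρ : ℕ → ℝ := fun b => if b = 0 then 0 else (2*d : ℝ)*(3*(b:ℝ))^(d-1) * psi s t K b with hρ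
  have hρnonneg : ∀ b, 0 ≤ ρ b := by
    intro b; rw [hρ]; dsimp only; split
    · exact le_refl 0
    · have := psi_nonneg s t K b
      positivity
  have step3 : ∑ b ∈ S.image supN, (#{a ∈ S | supN a = b} : ℕ) • psi s t K b
      ≤ ∑ b ∈ S.image supN, ρ b := by
    apply Finset.sum_le_sum
    intro b _
    rcases Nat.eq_zero_or_pos b with rfl | hb
    · rw [hρ]; dsimp only; rw [if_pos rfl, psi, if_pos rfl]; simp
    · rw [hρ]; dsimp only; rw [if_neg (by omega)]
      rw [nsmul_eq_mul]
      exact mul_le_mul_of_nonneg_right (card_shell_le hb S) (psi_nonneg s t K b)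
  -- step 4: extend to Icc 0 N
  have himg : S.image supN ⊆ Finset.Icc 0 N := by
    intro b hb
    rw [Finset.mem_image] at hb
    obtain ⟨m, hm, rfl⟩ := hb
    rw [Finset.mem_Icc]
    exact ⟨Nat.zero_le _, le_trans (Finset.le_sup hm) (le_max_right _ _)⟩
  have step4 : ∑ b ∈ S.image supN, ρ b ≤ ∑ b ∈ Finset.Icc 0 N, ρ b :=
    Finset.sum_le_sum_of_subset_of_nonneg himg (fun b _ _ => hρnonneg b)
  have hIcc0 : ∑ b ∈ Finset.Icc 0 N, ρ b = ∑ b ∈ Finset.Ioc 0 N, ρ b := by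
    rw [← Finset.Icc_add_one_left_eq_Ioc, zero_add]
    rw [show Finset.Icc 0 N = insert 0 (Finset.Icc 1 N) by ext x; simp; omega]
    rw [Finset.sum_insert (by simp)]
    rw [hρ]; dsimp only; rw [if_pos rfl, zero_add]
  -- step 5: split at L
  have hLN : L ≤ N := le_max_left _ _
  have hsplit : ∑ b ∈ Finset.Ioc 0 N, ρ b
      = ∑ b ∈ Finset.Ioc 0 L, ρ b + ∑ b ∈ Finset.Ioc L N, ρ b :=
    (Finset.sum_Ioc_consecutive _ (Nat.zero_le L) hLN).symm
  -- step 6: bound each piece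
  have hcastd : ∀ b : ℕ, 1 ≤ b → ((b:ℝ))^(d-1:ℕ) = (b:ℝ) ^ (((d:ℝ))-1) := by
    intro b hb
    rw [← Real.rpow_natCast]
    congr 1
    rw [Nat.cast_sub hd, Nat.cast_one]
  have hIoc1 : Finset.Ioc 0 L = Finset.Icc 1 L := (Finset.Icc_add_one_left_eq_Ioc 0 L).symm ▸ rfl
  have hIoc2 : Finset.Ioc L N = Finset.Icc (L+1) N := (Finset.Icc_add_one_left_eq_Ioc L N).symm ▸ rfl
  have hpiece1 : ∑ b ∈ Finset.Ioc 0 L, ρ b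
      ≤ (2*(d:ℝ)*3^(d-1)) * ((K/2) ^ (-t) * ∑ j ∈ Finset.Icc 1 L, ((j:ℝ)) ^ ((d:ℝ)-1-s)) := by
    rw [hIoc1, Finset.mul_sum, Finset.mul_sum]
    apply Finset.sum_le_sum
    intro b hb
    rw [Finset.mem_Icc] at hb
    have hb1 : 1 ≤ b := hb.1
    have hb0 : (0:ℝ) < (b:ℝ) := by exact_mod_cast Nat.lt_of_lt_of_le Nat.zero_lt_one hb1
    have hbK : ((b:ℝ)) ≤ K/2 := by
      rw [← Nat.le_floor_iff hK2.le]; exact hb.2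
    have hmax : max ((b:ℝ)) (K/2) = K/2 := max_eq_right hbK
    rw [hρ]; dsimp only
    rw [if_neg (by omega), psi, if_neg (by omega), hmax]
    rw [mul_pow, hcastd b hb1]
    rw [show (2*(d:ℝ))*((3:ℝ)^(d-1:ℕ) * (b:ℝ)^((d:ℝ)-1)) * ((b:ℝ)^(-s) * (K/2)^(-t))
      = 2*(d:ℝ)*3^(d-1:ℕ) * ((K/2)^(-t) * ((b:ℝ)^((d:ℝ)-1) * (b:ℝ)^(-s))) from by ring]
    rw [← Real.rpow_add hb0, show (d:ℝ)-1 + -s = (d:ℝ)-1-s from by ring]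
  have hpiece2 : ∑ b ∈ Finset.Ioc L N, ρ b
      ≤ (2*(d:ℝ)*3^(d-1)) * (∑ j ∈ Finset.Icc (L+1) N, ((j:ℝ)) ^ ((d:ℝ)-1-s-t)) := by
    rw [hIoc2, Finset.mul_sum]
    apply Finset.sum_le_sum
    intro b hb
    rw [Finset.mem_Icc] at hb
    have hb1 : 1 ≤ b := by omega
    have hb0 : (0:ℝ) < (b:ℝ) := by exact_mod_cast Nat.lt_of_lt_of_le Nat.zero_lt_one hb1
    have hbK : K/2 ≤ ((b:ℝ)) := by
      have : L < b := by omega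
      have := (Nat.floor_lt hK2.le).mp this
      linarith
    have hmax : max ((b:ℝ)) (K/2) = (b:ℝ) := max_eq_left hbK
    rw [hρ]; dsimp only
    rw [if_neg (by omega), psi, if_neg (by omega), hmax]
    rw [mul_pow, hcastd b hb1]
    rw [show (2*(d:ℝ))*((3:ℝ)^(d-1:ℕ) * (b:ℝ)^((d:ℝ)-1)) * ((b:ℝ)^(-s) * ((b:ℝ))^(-t))
      = 2*(d:ℝ)*3^(d-1:ℕ) * ((b:ℝ)^((d:ℝ)-1) * (b:ℝ)^(-s) * (b:ℝ)^(-t)) from by ring]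
    rw [← Real.rpow_add hb0, ← Real.rpow_add hb0,
      show (d:ℝ)-1 + -s + -t = (d:ℝ)-1-s-t from by ring]
  calc ∑ m ∈ S, phi d s t K m
      ≤ ∑ b ∈ S.image supN, (#{a ∈ S | supN a = b} : ℕ) • psi s t K b := step1
    _ ≤ ∑ b ∈ S.image supN, ρ b := step3
    _ ≤ ∑ b ∈ Finset.Icc 0 N, ρ b := step4
    _ = ∑ b ∈ Finset.Ioc 0 N, ρ b := hIcc0
    _ = ∑ b ∈ Finset.Ioc 0 L, ρ b + ∑ b ∈ Finset.Ioc L N, ρ b := hsplit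
    _ ≤ (2*(d:ℝ)*3^(d-1)) * ((K/2) ^ (-t) * ∑ j ∈ Finset.Icc 1 L, ((j:ℝ)) ^ ((d:ℝ)-1-s))
        + (2*(d:ℝ)*3^(d-1)) * (∑ j ∈ Finset.Icc (L+1) N, ((j:ℝ)) ^ ((d:ℝ)-1-s-t)) :=
        add_le_add hpiece1 hpiece2
    _ = _ := by ring


lemma tail_part_bound (hd : 1 ≤ d) {s t : ℝ} (hs : 0 < s) (ht : 0 < t)
    (hst : (d:ℝ) < s + t) {K : ℝ} (hK : 1 ≤ K) (N : ℕ) :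
    ∑ j ∈ Finset.Icc (⌊K/2⌋₊+1) N, ((j:ℝ)) ^ ((d:ℝ)-1-s-t)
      ≤ (1 + 1/(s+t-d)) * (K/2) ^ ((d:ℝ)-s-t) := by
  have hK2 : (0:ℝ) < K/2 := by linarith
  set L : ℕ := ⌊K/2⌋₊ with hL
  set u : ℝ := s + t - (d:ℝ) + 1 with hu
  have hu1 : 1 < u := by rw [hu]; linarith
  have hexp : ∀ j : ℕ, ((j:ℝ)) ^ ((d:ℝ)-1-s-t) = ((j:ℝ)) ^ (-u) := by
    intro j; congr 1; rw [hu]; ring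
  have h1 : ∑ j ∈ Finset.Icc (L+1) N, ((j:ℝ)) ^ ((d:ℝ)-1-s-t)
      = ∑ j ∈ Finset.Icc (L+1) N, ((j:ℝ)) ^ (-u) := by
    apply Finset.sum_congr rfl; intro j _; exact hexp j
  rw [h1]
  have h2 := tail_sum hu1 (L+1) (by omega) N
  apply h2.trans
  have he : 1 - u = (d:ℝ) - s - t := by rw [hu]; ring
  have hc : 1 + 1/(u-1) = 1 + 1/(s+t-d) := by rw [hu]; ring_nf
  have hbase : K/2 ≤ ((L+1:ℕ):ℝ) := by
    push_cast
    have := Nat.lt_floor_add_one (K/2)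
    linarith
  have h3 : ((L+1:ℕ):ℝ) ^ (1-u) ≤ (K/2) ^ (1-u) :=
    Real.rpow_le_rpow_of_nonpos hK2 hbase (by linarith)
  calc (1 + 1/(u-1)) * ((L+1:ℕ):ℝ) ^ (1-u) ≤ (1 + 1/(u-1)) * (K/2) ^ (1-u) := by
        apply mul_le_mul_of_nonneg_left h3
        have : 0 < u - 1 := by linarith
        positivity
    _ = (1 + 1/(s+t-d)) * (K/2) ^ ((d:ℝ)-s-t) := by rw [hc, he]

lemma core_ne (hd : 1 ≤ d) {s t : ℝ} (hs : 0 < s) (ht : 0 < t)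
    (hst : (d:ℝ) < s + t) (hsd : s ≠ (d:ℝ)) :
    ∃ C : ℝ, 0 < C ∧ ∀ K : ℝ, 1 ≤ K → ∀ S : Finset (Fin d → ℤ),
      ∑ m ∈ S, phi d s t K m ≤ C * K ^ (-(min t (s + t - d))) := by
  have hCd : (0:ℝ) < 2*(d:ℝ)*3^(d-1) := by
    have : (1:ℝ) ≤ (d:ℝ) := by exact_mod_cast hd
    positivity
  set Cd : ℝ := 2*(d:ℝ)*3^(d-1) with hCddef
  have hcT : (0:ℝ) < 1 + 1/(s+t-d) := by
    have : (0:ℝ) < s + t - d := by linarith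
    positivity
  rcases lt_or_gt_of_ne hsd with hlt | hgt
  · -- s < d
    set q : ℝ := (d:ℝ) - s with hq
    have hq0 : 0 < q := by rw [hq]; linarith
    have hqt : q < t := by rw [hq]; linarith
    refine ⟨Cd * ((2/q + 1) + (1 + 1/(s+t-d))) * 2 ^ (s+t-(d:ℝ)) + 1, by positivity, ?_⟩
    intro K hK S
    have hK2 : (0:ℝ) < K/2 := by linarith
    obtain ⟨N, hLN, hsk⟩ := core_skeleton hd hs ht hK S
    set L : ℕ := ⌊K/2⌋₊ with hL
    -- head bound
    have hhead : ∑ j ∈ Finset.Icc 1 L, ((j:ℝ)) ^ ((d:ℝ)-1-s) ≤ (2/q + 1) * (K/2) ^ q := by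
      have hLK : ((L:ℕ):ℝ) ≤ K/2 := Nat.floor_le hK2.le
      have hLq : ((L:ℕ):ℝ) ^ q ≤ (K/2) ^ q :=
        Real.rpow_le_rpow (Nat.cast_nonneg _) hLK hq0.le
      have hexp : ∀ j : ℕ, ((j:ℝ)) ^ ((d:ℝ)-1-s) = ((j:ℝ)) ^ (q - 1) := by
        intro j; congr 1; rw [hq]; ring
      rw [Finset.sum_congr rfl fun j _ => hexp j]
      rcases le_or_gt q 1 with hq1 | hq1
      · have := head_sum_mid hq0 hq1 L
        have hnn : (0:ℝ) ≤ ((L:ℕ):ℝ) ^ q := Real.rpow_nonneg (Nat.cast_nonneg _) _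
        calc _ ≤ 2/q * ((L:ℕ):ℝ) ^ q := this
          _ ≤ (2/q + 1) * ((L:ℕ):ℝ) ^ q := by nlinarith
          _ ≤ (2/q + 1) * (K/2) ^ q := by
              apply mul_le_mul_of_nonneg_left hLq (by positivity)
      · have hr : (0:ℝ) ≤ q - 1 := by linarith
        have := head_sum_big hr L
        rw [show q - 1 + 1 = q from by ring] at this
        calc _ ≤ ((L:ℕ):ℝ) ^ q := this
          _ ≤ (2/q + 1) * ((L:ℕ):ℝ) ^ q := by
              have hnn : (0:ℝ) ≤ ((L:ℕ):ℝ) ^ q := Real.rpow_nonneg (Nat.cast_nonneg _) _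
              nlinarith [div_pos (by norm_num : (0:ℝ) < 2) hq0]
          _ ≤ (2/q + 1) * (K/2) ^ q := by
              apply mul_le_mul_of_nonneg_left hLq (by positivity)
    have htail := tail_part_bound hd hs ht hst hK N
    -- combine
    have hcomb : ∑ m ∈ S, phi d s t K m
        ≤ Cd * ((2/q + 1) + (1 + 1/(s+t-d))) * (K/2) ^ ((d:ℝ)-s-t) := by
      apply hsk.trans
      have e1 : (K/2) ^ (-t) * ((K/2) ^ q) = (K/2) ^ ((d:ℝ)-s-t) := by
        rw [← Real.rpow_add hK2]; congr 1; rw [hq]; ring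
      have h5 : (K/2) ^ (-t) * ∑ j ∈ Finset.Icc 1 L, ((j:ℝ)) ^ ((d:ℝ)-1-s)
          ≤ (2/q + 1) * (K/2) ^ ((d:ℝ)-s-t) := by
        rw [← e1]
        have h6 : (0:ℝ) ≤ (K/2) ^ (-t) := Real.rpow_nonneg hK2.le _
        calc (K/2) ^ (-t) * ∑ j ∈ Finset.Icc 1 L, ((j:ℝ)) ^ ((d:ℝ)-1-s)
            ≤ (K/2) ^ (-t) * ((2/q + 1) * (K/2) ^ q) :=
              mul_le_mul_of_nonneg_left hhead h6
          _ = (2/q + 1) * ((K/2) ^ (-t) * (K/2) ^ q) := by ring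
      calc Cd * ((K/2) ^ (-t) * ∑ j ∈ Finset.Icc 1 L, ((j:ℝ)) ^ ((d:ℝ)-1-s)
            + ∑ j ∈ Finset.Icc (L+1) N, ((j:ℝ)) ^ ((d:ℝ)-1-s-t))
          ≤ Cd * ((2/q + 1) * (K/2) ^ ((d:ℝ)-s-t) + (1 + 1/(s+t-d)) * (K/2) ^ ((d:ℝ)-s-t)) := by
            apply mul_le_mul_of_nonneg_left (add_le_add h5 htail) hCd.le
        _ = Cd * ((2/q + 1) + (1 + 1/(s+t-d))) * (K/2) ^ ((d:ℝ)-s-t) := by ring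
    -- convert (K/2)^(d-s-t) to K^(-min)
    have hmin : min t (s + t - (d:ℝ)) = s + t - d := min_eq_right (by linarith)
    have e2 : (K/2) ^ ((d:ℝ)-s-t) = K ^ (-(s+t-(d:ℝ))) * 2 ^ (s+t-(d:ℝ)) := by
      rw [div_eq_mul_inv, Real.mul_rpow (by linarith) (by norm_num),
        Real.inv_rpow (by norm_num : (0:ℝ) ≤ 2), ← Real.rpow_neg (by norm_num : (0:ℝ) ≤ 2)]
      congr 2 <;> ring
    rw [hmin]
    have hKnn : (0:ℝ) ≤ K ^ (-(s+t-(d:ℝ))) := Real.rpow_nonneg (by linarith) _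
    calc ∑ m ∈ S, phi d s t K m
        ≤ Cd * ((2/q + 1) + (1 + 1/(s+t-d))) * (K/2) ^ ((d:ℝ)-s-t) := hcomb
      _ = Cd * ((2/q + 1) + (1 + 1/(s+t-d))) * 2 ^ (s+t-(d:ℝ)) * K ^ (-(s+t-(d:ℝ))) := by
          rw [e2]; ring
      _ ≤ (Cd * ((2/q + 1) + (1 + 1/(s+t-d))) * 2 ^ (s+t-(d:ℝ)) + 1) * K ^ (-(s+t-(d:ℝ))) :=
          mul_le_mul_of_nonneg_right (by linarith) hKnn
  · -- s > d
    have hsd0 : (0:ℝ) < s - d := by linarith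
    refine ⟨Cd * ((1 + 1/(s-d)) + (1 + 1/(s+t-d))) * 2 ^ (s+t) + 1, by positivity, ?_⟩
    intro K hK S
    have hK2 : (0:ℝ) < K/2 := by linarith
    obtain ⟨N, hLN, hsk⟩ := core_skeleton hd hs ht hK S
    set L : ℕ := ⌊K/2⌋₊ with hL
    set u : ℝ := s - (d:ℝ) + 1 with hu
    have hu1 : 1 < u := by rw [hu]; linarith
    have hhead : ∑ j ∈ Finset.Icc 1 L, ((j:ℝ)) ^ ((d:ℝ)-1-s) ≤ 1 + 1/(s-d) := by
      have hexp : ∀ j : ℕ, ((j:ℝ)) ^ ((d:ℝ)-1-s) = ((j:ℝ)) ^ (-u) := by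
        intro j; congr 1; rw [hu]; ring
      rw [Finset.sum_congr rfl fun j _ => hexp j]
      have := tail_sum hu1 1 (le_refl 1) L
      apply this.trans
      rw [Nat.cast_one, Real.one_rpow]
      have : 1 + 1/(u-1) = 1 + 1/(s-d) := by rw [hu]; ring_nf
      rw [this, mul_one]
    have htail := tail_part_bound hd hs ht hst hK N
    -- conversions
    have eA : (K/2) ^ (-t) = K ^ (-t) * 2 ^ t := by
      rw [div_eq_mul_inv, Real.mul_rpow (by linarith) (by norm_num),
        Real.inv_rpow (by norm_num : (0:ℝ) ≤ 2), ← Real.rpow_neg (by norm_num : (0:ℝ) ≤ 2)]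
      congr 2; ring
    have eB : (K/2) ^ ((d:ℝ)-s-t) = K ^ (-(s+t-(d:ℝ))) * 2 ^ (s+t-(d:ℝ)) := by
      rw [div_eq_mul_inv, Real.mul_rpow (by linarith) (by norm_num),
        Real.inv_rpow (by norm_num : (0:ℝ) ≤ 2), ← Real.rpow_neg (by norm_num : (0:ℝ) ≤ 2)]
      congr 2 <;> ring
    set β : ℝ := min t (s + t - (d:ℝ)) with hβ
    have hβt : β ≤ t := min_le_left _ _
    have hβst : β ≤ s + t - d := min_le_right _ _
    have hKβnn : (0:ℝ) ≤ K ^ (-β) := Real.rpow_nonneg (by linarith) _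
    have hm1 : K ^ (-t) ≤ K ^ (-β) := Real.rpow_le_rpow_of_exponent_le hK (by linarith)
    have hm2 : K ^ (-(s+t-(d:ℝ))) ≤ K ^ (-β) := Real.rpow_le_rpow_of_exponent_le hK (by linarith)
    have h2t : (2:ℝ) ^ t ≤ 2 ^ (s+t) := Real.rpow_le_rpow_of_exponent_le (by norm_num) (by linarith)
    have h2st : (2:ℝ) ^ (s+t-(d:ℝ)) ≤ 2 ^ (s+t) := by
      apply Real.rpow_le_rpow_of_exponent_le (by norm_num)
      have : (0:ℝ) ≤ (d:ℝ) := Nat.cast_nonneg d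
      linarith
    have h2ta : (0:ℝ) < (2:ℝ) ^ t := Real.rpow_pos_of_pos (by norm_num) _
    have h2sta : (0:ℝ) < (2:ℝ) ^ (s+t-(d:ℝ)) := Real.rpow_pos_of_pos (by norm_num) _
    have hKt : (0:ℝ) ≤ K ^ (-t) := Real.rpow_nonneg (by linarith) _
    have hKst : (0:ℝ) ≤ K ^ (-(s+t-(d:ℝ))) := Real.rpow_nonneg (by linarith) _
    have hc1 : (0:ℝ) < 1 + 1/(s-d) := by positivity
    apply hsk.trans
    have hA : (K/2) ^ (-t) * ∑ j ∈ Finset.Icc 1 L, ((j:ℝ)) ^ ((d:ℝ)-1-s)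
        ≤ (1 + 1/(s-d)) * (2 ^ (s+t) * K ^ (-β)) := by
      have hKA : (0:ℝ) ≤ (K/2) ^ (-t) := Real.rpow_nonneg hK2.le _
      calc (K/2) ^ (-t) * ∑ j ∈ Finset.Icc 1 L, ((j:ℝ)) ^ ((d:ℝ)-1-s)
          ≤ (K/2) ^ (-t) * (1 + 1/(s-d)) := mul_le_mul_of_nonneg_left hhead hKA
        _ = (1 + 1/(s-d)) * (K ^ (-t) * 2 ^ t) := by rw [eA]; ring
        _ ≤ (1 + 1/(s-d)) * (2 ^ (s+t) * K ^ (-β)) := by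
            apply mul_le_mul_of_nonneg_left ?_ hc1.le
            calc K ^ (-t) * 2 ^ t ≤ K ^ (-β) * 2 ^ (s+t) := by
                  apply mul_le_mul hm1 h2t h2ta.le hKβnn
              _ = 2 ^ (s+t) * K ^ (-β) := by ring
    have hB : ∑ j ∈ Finset.Icc (L+1) N, ((j:ℝ)) ^ ((d:ℝ)-1-s-t)
        ≤ (1 + 1/(s+t-d)) * (2 ^ (s+t) * K ^ (-β)) := by
      apply htail.trans
      rw [eB]
      apply mul_le_mul_of_nonneg_left ?_ hcT.le
      calc K ^ (-(s+t-(d:ℝ))) * 2 ^ (s+t-(d:ℝ)) ≤ K ^ (-β) * 2 ^ (s+t) :=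
            mul_le_mul hm2 h2st h2sta.le hKβnn
        _ = 2 ^ (s+t) * K ^ (-β) := by ring
    have h2stp : (0:ℝ) < (2:ℝ) ^ (s+t) := Real.rpow_pos_of_pos (by norm_num) _
    calc Cd * ((K/2) ^ (-t) * ∑ j ∈ Finset.Icc 1 L, ((j:ℝ)) ^ ((d:ℝ)-1-s)
          + ∑ j ∈ Finset.Icc (L+1) N, ((j:ℝ)) ^ ((d:ℝ)-1-s-t))
        ≤ Cd * ((1 + 1/(s-d)) * (2 ^ (s+t) * K ^ (-β))
            + (1 + 1/(s+t-d)) * (2 ^ (s+t) * K ^ (-β))) :=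
          mul_le_mul_of_nonneg_left (add_le_add hA hB) hCd.le
      _ = Cd * ((1 + 1/(s-d)) + (1 + 1/(s+t-d))) * 2 ^ (s+t) * K ^ (-β) := by ring
      _ ≤ (Cd * ((1 + 1/(s-d)) + (1 + 1/(s+t-d))) * 2 ^ (s+t) + 1) * K ^ (-β) :=
          mul_le_mul_of_nonneg_right (by linarith) hKβnn

lemma core_eq_d (hd : 1 ≤ d) {t : ℝ} (ht : 0 < t) :
    ∃ C : ℝ, 0 < C ∧ ∀ K : ℝ, 1 ≤ K → ∀ S : Finset (Fin d → ℤ),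
      ∑ m ∈ S, phi d (d:ℝ) t K m ≤ C * K ^ (-t) * (1 + Real.log K) := by
  have hCd : (0:ℝ) < 2*(d:ℝ)*3^(d-1) := by
    have : (1:ℝ) ≤ (d:ℝ) := by exact_mod_cast hd
    positivity
  set Cd : ℝ := 2*(d:ℝ)*3^(d-1) with hCddef
  have hst : (d:ℝ) < (d:ℝ) + t := by linarith
  have hcT : (0:ℝ) < 1 + 1/((d:ℝ)+t-d) := by
    have h0 : (d:ℝ)+t-d = t := by ring
    rw [h0]; positivity
  refine ⟨Cd * (1 + (1 + 1/((d:ℝ)+t-d))) * 2 ^ t + 1, by positivity, ?_⟩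
  intro K hK S
  have hK2 : (0:ℝ) < K/2 := by linarith
  have hds : (0:ℝ) < (d:ℝ) := by exact_mod_cast Nat.lt_of_lt_of_le Nat.zero_lt_one hd
  obtain ⟨N, hLN, hsk⟩ := core_skeleton hd hds ht hK S
  set L : ℕ := ⌊K/2⌋₊ with hL
  have hlogK : (0:ℝ) ≤ Real.log K := Real.log_nonneg hK
  have hhead : ∑ j ∈ Finset.Icc 1 L, ((j:ℝ)) ^ ((d:ℝ)-1-(d:ℝ)) ≤ 1 + Real.log K := by
    have hexp : ∀ j : ℕ, ((j:ℝ)) ^ ((d:ℝ)-1-(d:ℝ)) = ((j:ℝ)) ^ (-1:ℝ) := by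
      intro j; congr 1; ring
    rw [Finset.sum_congr rfl fun j _ => hexp j]
    apply (head_sum_one L).trans
    have hlogL : Real.log (L:ℝ) ≤ Real.log K := by
      rcases Nat.eq_zero_or_pos L with hL0 | hL1
      · rw [hL0]; simpa using hlogK
      · apply Real.log_le_log (by exact_mod_cast hL1)
        have := Nat.floor_le hK2.le
        calc ((L:ℕ):ℝ) ≤ K/2 := this
          _ ≤ K := by linarith
    linarith
  have htail := tail_part_bound hd hds ht hst hK N
  have heB : (K/2) ^ ((d:ℝ)-(d:ℝ)-t) = (K/2) ^ (-t) := by congr 1; ring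
  have eA : (K/2) ^ (-t) = K ^ (-t) * 2 ^ t := by
    rw [div_eq_mul_inv, Real.mul_rpow (by linarith) (by norm_num),
      Real.inv_rpow (by norm_num : (0:ℝ) ≤ 2), ← Real.rpow_neg (by norm_num : (0:ℝ) ≤ 2)]
    congr 2; ring
  apply hsk.trans
  have hKA : (0:ℝ) ≤ (K/2) ^ (-t) := Real.rpow_nonneg hK2.le _
  have h1log : (1:ℝ) ≤ 1 + Real.log K := by linarith
  have hA : (K/2) ^ (-t) * ∑ j ∈ Finset.Icc 1 L, ((j:ℝ)) ^ ((d:ℝ)-1-(d:ℝ))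
      ≤ (K/2) ^ (-t) * (1 + Real.log K) :=
    mul_le_mul_of_nonneg_left hhead hKA
  have hB : ∑ j ∈ Finset.Icc (L+1) N, ((j:ℝ)) ^ ((d:ℝ)-1-(d:ℝ)-t)
      ≤ (1 + 1/((d:ℝ)+t-d)) * ((K/2) ^ (-t) * (1 + Real.log K)) := by
    apply htail.trans
    rw [heB]
    have h2 : (K/2) ^ (-t) ≤ (K/2) ^ (-t) * (1 + Real.log K) := by
      nlinarith [hKA]
    apply mul_le_mul_of_nonneg_left h2 hcT.le
  calc Cd * ((K/2) ^ (-t) * ∑ j ∈ Finset.Icc 1 L, ((j:ℝ)) ^ ((d:ℝ)-1-(d:ℝ))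
        + ∑ j ∈ Finset.Icc (L+1) N, ((j:ℝ)) ^ ((d:ℝ)-1-(d:ℝ)-t))
      ≤ Cd * ((K/2) ^ (-t) * (1 + Real.log K)
          + (1 + 1/((d:ℝ)+t-d)) * ((K/2) ^ (-t) * (1 + Real.log K))) :=
        mul_le_mul_of_nonneg_left (add_le_add hA hB) hCd.le
    _ = Cd * (1 + (1 + 1/((d:ℝ)+t-d))) * ((K/2) ^ (-t)) * (1 + Real.log K) := by ring
    _ = Cd * (1 + (1 + 1/((d:ℝ)+t-d))) * 2 ^ t * K ^ (-t) * (1 + Real.log K) := by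
        rw [eA]; ring
    _ ≤ (Cd * (1 + (1 + 1/((d:ℝ)+t-d))) * 2 ^ t + 1) * K ^ (-t) * (1 + Real.log K) := by
        have hKt : (0:ℝ) ≤ K ^ (-t) := Real.rpow_nonneg (by linarith) _
        apply mul_le_mul_of_nonneg_right ?_ (by linarith)
        exact mul_le_mul_of_nonneg_right (by linarith) hKt
  



noncomputable def gfun (d : ℕ) (α γ : ℝ) (k m : Fin d → ℤ) : ℝ :=
  1 / (latNorm m ^ α * latNorm (k - m) ^ γ)

lemma gfun_nonneg (α γ : ℝ) (k m : Fin d → ℤ) : 0 ≤ gfun d α γ k m := by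
  rw [gfun]
  have h1 : (0:ℝ) ≤ latNorm m ^ α := Real.rpow_nonneg (latNorm_nonneg m) _
  have h2 : (0:ℝ) ≤ latNorm (k - m) ^ γ := Real.rpow_nonneg (latNorm_nonneg _) _
  positivity

lemma gfun_pointwise {α γ : ℝ} (hα : 0 < α) (hγ : 0 < γ) {k : Fin d → ℤ} (hk : k ≠ 0)
    (m : Fin d → ℤ) :
    gfun d α γ k m ≤ phi d α γ (latNorm k) m + phi d γ α (latNorm k) (k - m) := by
  have hphi1 := phi_nonneg (d := d) α γ (latNorm k)
  have hphi2 := phi_nonneg (d := d) γ α (latNorm k)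
  rcases eq_or_ne m 0 with rfl | hm
  · rw [gfun, latNorm_zero, Real.zero_rpow hα.ne', zero_mul, div_zero]
    exact add_nonneg (hphi1 _) (hphi2 _)
  rcases eq_or_ne m k with rfl | hmk
  · rw [gfun, sub_self, latNorm_zero, Real.zero_rpow hγ.ne', mul_zero, div_zero]
    exact add_nonneg (hphi1 _) (hphi2 _)
  have hkm : k - m ≠ 0 := sub_ne_zero_of_ne (Ne.symm hmk)
  set a : ℝ := latNorm m with ha
  set b : ℝ := latNorm (k - m) with hb
  set K : ℝ := latNorm k with hKd
  have ha1 : 1 ≤ a := one_le_latNorm hm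
  have hb1 : 1 ≤ b := one_le_latNorm hkm
  have htri : K ≤ a + b := by
    have : m + (k - m) = k := by abel
    calc K = latNorm (m + (k - m)) := by rw [this]
      _ ≤ a + b := latNorm_triangle m (k - m)
  have ha0 : (0:ℝ) < a := by linarith
  have hb0 : (0:ℝ) < b := by linarith
  rcases le_total a b with hab | hab
  · -- b is big : use phi d α γ at m
    have hbK : K / 2 ≤ b := by linarith
    have hbmax : max a (K/2) ≤ b := max_le hab hbK
    have hle : gfun d α γ k m ≤ phi d α γ K m := by
      rw [gfun, phi, if_neg hm, ← ha, ← hb]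
      apply one_div_le_one_div_of_le
      · have h1 := Real.rpow_pos_of_pos ha0 α
        have h2 := Real.rpow_pos_of_pos (lt_of_lt_of_le ha0 (le_max_left a (K/2))) γ
        positivity
      · apply mul_le_mul_of_nonneg_left ?_ (Real.rpow_nonneg ha0.le α)
        exact Real.rpow_le_rpow (le_max_of_le_left ha0.le) hbmax hγ.le
    calc gfun d α γ k m ≤ phi d α γ K m := hle
      _ ≤ _ := le_add_of_nonneg_right (hphi2 _)
  · -- a is big: use phi d γ α at k - m
    have haK : K / 2 ≤ a := by linarith
    have hamax : max b (K/2) ≤ a := max_le hab haK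
    have hle : gfun d α γ k m ≤ phi d γ α K (k - m) := by
      rw [gfun, phi, if_neg hkm, ← ha, ← hb]
      rw [show latNorm m ^ α * b ^ γ = b ^ γ * latNorm m ^ α from mul_comm _ _, ← ha]
      apply one_div_le_one_div_of_le
      · have h1 := Real.rpow_pos_of_pos hb0 γ
        have h2 := Real.rpow_pos_of_pos (lt_of_lt_of_le hb0 (le_max_left b (K/2))) α
        positivity
      · apply mul_le_mul_of_nonneg_left ?_ (Real.rpow_nonneg hb0.le γ)
        exact Real.rpow_le_rpow (le_max_of_le_left hb0.le) hamax hα.le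
    calc gfun d α γ k m ≤ phi d γ α K (k - m) := hle
      _ ≤ _ := le_add_of_nonneg_left (hphi1 _)

lemma gfun_sum_le {α γ : ℝ} (hα : 0 < α) (hγ : 0 < γ) {k : Fin d → ℤ} (hk : k ≠ 0)
    (S : Finset (Fin d → ℤ)) :
    ∑ m ∈ S, gfun d α γ k m ≤
      ∑ m ∈ S, phi d α γ (latNorm k) m
        + ∑ n ∈ S.image (fun m => k - m), phi d γ α (latNorm k) n := by
  have h1 : ∑ m ∈ S, gfun d α γ k m
      ≤ ∑ m ∈ S, (phi d α γ (latNorm k) m + phi d γ α (latNorm k) (k - m)) :=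
    Finset.sum_le_sum fun m _ => gfun_pointwise hα hγ hk m
  rw [Finset.sum_add_distrib] at h1
  have h2 : ∑ n ∈ S.image (fun m => k - m), phi d γ α (latNorm k) n
      = ∑ m ∈ S, phi d γ α (latNorm k) (k - m) := by
    apply Finset.sum_image
    intro x _ y _ hxy
    have := congrArg (fun z => k - z) (hxy : k - x = k - y)
    simpa using hxy
  rw [h2]
  exact h1

/-- real master bound, non-log case -/
lemma master_ne (hd : 1 ≤ d) {α γ : ℝ} (hα : 0 < α) (hγ : 0 < γ)
    (hsum : (d:ℝ) < α + γ) (hαd : α ≠ (d:ℝ)) (hγd : γ ≠ (d:ℝ)) :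
    ∃ C : ℝ, 0 < C ∧ ∀ k : Fin d → ℤ, k ≠ 0 → ∀ S : Finset (Fin d → ℤ),
      ∑ m ∈ S, gfun d α γ k m
        ≤ C * (1 + latNorm k) ^ (-(min α (min γ (α + γ - d)))) := by
  obtain ⟨C₁, hC₁, hb₁⟩ := core_ne hd hα hγ hsum hαd
  obtain ⟨C₂, hC₂, hb₂⟩ := core_ne hd hγ hα (by linarith) hγd
  set β : ℝ := min α (min γ (α + γ - (d:ℝ))) with hβ
  have hβ0 : 0 < β := by
    rw [hβ]; apply lt_min hα; apply lt_min hγ; linarith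
  have h2β : (0:ℝ) < 2 ^ β := Real.rpow_pos_of_pos (by norm_num) _
  refine ⟨(C₁ + C₂) * 2 ^ β + 1, by positivity, ?_⟩
  intro k hk S
  set K : ℝ := latNorm k with hKd
  have hK1 : 1 ≤ K := one_le_latNorm hk
  have hK0 : (0:ℝ) < K := by linarith
  have h1 := hb₁ K hK1 S
  have h2 := hb₂ K hK1 (S.image (fun m => k - m))
  have hsum2 : ∑ m ∈ S, gfun d α γ k m
      ≤ C₁ * K ^ (-(min γ (α + γ - (d:ℝ)))) + C₂ * K ^ (-(min α (γ + α - (d:ℝ)))) :=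
    (gfun_sum_le hα hγ hk S).trans (add_le_add h1 h2)
  have hβ1 : β ≤ min γ (α + γ - (d:ℝ)) := by
    rw [hβ]; exact le_trans (min_le_right _ _) (le_refl _)
  have hβ2 : β ≤ min α (γ + α - (d:ℝ)) := by
    rw [hβ]
    apply le_min (min_le_left _ _)
    rw [show γ + α - (d:ℝ) = α + γ - (d:ℝ) from by ring]
    exact le_trans (min_le_right _ _) (min_le_right _ _)
  have hm1 : K ^ (-(min γ (α + γ - (d:ℝ)))) ≤ K ^ (-β) :=
    Real.rpow_le_rpow_of_exponent_le hK1 (by linarith)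
  have hm2 : K ^ (-(min α (γ + α - (d:ℝ)))) ≤ K ^ (-β) :=
    Real.rpow_le_rpow_of_exponent_le hK1 (by linarith)
  have hKβ : (0:ℝ) ≤ K ^ (-β) := Real.rpow_nonneg hK0.le _
  have hkey : K ^ (-β) ≤ 2 ^ β * (1 + K) ^ (-β) := by
    have h1K : (0:ℝ) < 1 + K := by linarith
    have hKb : (0:ℝ) < K ^ β := Real.rpow_pos_of_pos hK0 _
    have h1Kb : (0:ℝ) < (1 + K) ^ β := Real.rpow_pos_of_pos h1K _
    have hmono : (1 + K) ^ β ≤ 2 ^ β * K ^ β := by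
      rw [← Real.mul_rpow (by norm_num) hK0.le]
      exact Real.rpow_le_rpow h1K.le (by linarith) hβ0.le
    rw [Real.rpow_neg hK0.le, Real.rpow_neg h1K.le, ← one_div, ← one_div, mul_one_div,
      div_le_div_iff₀ hKb h1Kb]
    linarith [hmono]
  calc ∑ m ∈ S, gfun d α γ k m
      ≤ C₁ * K ^ (-(min γ (α + γ - (d:ℝ)))) + C₂ * K ^ (-(min α (γ + α - (d:ℝ)))) := hsum2
    _ ≤ C₁ * K ^ (-β) + C₂ * K ^ (-β) :=
        add_le_add (mul_le_mul_of_nonneg_left hm1 hC₁.le) (mul_le_mul_of_nonneg_left hm2 hC₂.le)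
    _ = (C₁ + C₂) * K ^ (-β) := by ring
    _ ≤ (C₁ + C₂) * (2 ^ β * (1 + K) ^ (-β)) :=
        mul_le_mul_of_nonneg_left hkey (by positivity)
    _ = ((C₁ + C₂) * 2 ^ β) * (1 + K) ^ (-β) := by ring
    _ ≤ ((C₁ + C₂) * 2 ^ β + 1) * (1 + K) ^ (-β) := by
        have h0 : (0:ℝ) ≤ (1 + K) ^ (-β) := Real.rpow_nonneg (by linarith) _
        exact mul_le_mul_of_nonneg_right (by linarith) h0


lemma one_side_log (hd : 1 ≤ d) {α γ : ℝ} (hα : 0 < α) (hγ : 0 < γ)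
    (hsum : (d:ℝ) < α + γ) :
    ∃ C : ℝ, 0 < C ∧ ∀ K : ℝ, 1 ≤ K → ∀ S : Finset (Fin d → ℤ),
      ∑ m ∈ S, phi d α γ K m
        ≤ C * K ^ (-(min α (min γ (α + γ - (d:ℝ))))) * (1 + Real.log K) := by
  set β : ℝ := min α (min γ (α + γ - (d:ℝ))) with hβ
  have hβγ : β ≤ γ := le_trans (min_le_right _ _) (min_le_left _ _)
  have hβm : β ≤ min γ (α + γ - (d:ℝ)) := min_le_right _ _
  by_cases hαd : α = (d:ℝ)
  · obtain ⟨C, hC, hb⟩ := core_eq_d hd hγ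
    refine ⟨C, hC, ?_⟩
    intro K hK S
    have h1 : ∑ m ∈ S, phi d α γ K m ≤ C * K ^ (-γ) * (1 + Real.log K) := by
      have := hb K hK S
      rw [← hαd] at this
      exact this
    apply h1.trans
    have hm : K ^ (-γ) ≤ K ^ (-β) := Real.rpow_le_rpow_of_exponent_le hK (by linarith)
    have hlog1 : (0:ℝ) ≤ 1 + Real.log K := by
      have := Real.log_nonneg hK; linarith
    apply mul_le_mul_of_nonneg_right ?_ hlog1
    exact mul_le_mul_of_nonneg_left hm hC.le
  · obtain ⟨C, hC, hb⟩ := core_ne hd hα hγ hsum hαd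
    refine ⟨C, hC, ?_⟩
    intro K hK S
    apply (hb K hK S).trans
    have hm : K ^ (-(min γ (α + γ - (d:ℝ)))) ≤ K ^ (-β) :=
      Real.rpow_le_rpow_of_exponent_le hK (by linarith)
    have hlogK : (0:ℝ) ≤ Real.log K := Real.log_nonneg hK
    have hKβ : (0:ℝ) ≤ K ^ (-β) := Real.rpow_nonneg (by linarith) _
    calc C * K ^ (-(min γ (α + γ - (d:ℝ)))) ≤ C * K ^ (-β) :=
          mul_le_mul_of_nonneg_left hm hC.le
      _ = C * K ^ (-β) * 1 := by ring
      _ ≤ C * K ^ (-β) * (1 + Real.log K) := by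
          apply mul_le_mul_of_nonneg_left (by linarith) (by positivity)

/-- real master bound, log case -/
lemma master_log (hd : 1 ≤ d) {α γ : ℝ} (hα : 0 < α) (hγ : 0 < γ)
    (hsum : (d:ℝ) < α + γ) :
    ∃ C : ℝ, 0 < C ∧ ∀ k : Fin d → ℤ, k ≠ 0 → ∀ S : Finset (Fin d → ℤ),
      ∑ m ∈ S, gfun d α γ k m
        ≤ C * (1 + latNorm k) ^ (-(min α (min γ (α + γ - d)))) * Real.log (1 + latNorm k) := by
  obtain ⟨C₁, hC₁, hb₁⟩ := one_side_log hd hα hγ hsum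
  obtain ⟨C₂, hC₂, hb₂⟩ := one_side_log hd hγ hα (by linarith)
  set β : ℝ := min α (min γ (α + γ - (d:ℝ))) with hβ
  have hβ0 : 0 < β := by
    rw [hβ]; apply lt_min hα; apply lt_min hγ; linarith
  have hswap : min γ (min α (γ + α - (d:ℝ))) = β := by
    rw [hβ, show γ + α - (d:ℝ) = α + γ - (d:ℝ) from by ring, min_left_comm]
  have h2β : (0:ℝ) < 2 ^ β := Real.rpow_pos_of_pos (by norm_num) _
  have hl2 : (0:ℝ) < Real.log 2 := Real.log_pos one_lt_two
  set c₀ : ℝ := 1 / Real.log 2 + 1 with hc₀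
  have hc₀0 : 0 < c₀ := by positivity
  refine ⟨(C₁ + C₂) * 2 ^ β * c₀ + 1, by positivity, ?_⟩
  intro k hk S
  set K : ℝ := latNorm k with hKd
  have hK1 : 1 ≤ K := one_le_latNorm hk
  have hK0 : (0:ℝ) < K := by linarith
  have h1 := hb₁ K hK1 S
  have h2 := hb₂ K hK1 (S.image (fun m => k - m))
  rw [hswap] at h2
  have hsum2 : ∑ m ∈ S, gfun d α γ k m
      ≤ (C₁ + C₂) * K ^ (-β) * (1 + Real.log K) := by
    apply (gfun_sum_le hα hγ hk S).trans
    calc ∑ m ∈ S, phi d α γ K m + ∑ n ∈ S.image (fun m => k - m), phi d γ α K n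
        ≤ C₁ * K ^ (-β) * (1 + Real.log K) + C₂ * K ^ (-β) * (1 + Real.log K) :=
          add_le_add h1 h2
      _ = (C₁ + C₂) * K ^ (-β) * (1 + Real.log K) := by ring
  apply hsum2.trans
  have hkey : K ^ (-β) ≤ 2 ^ β * (1 + K) ^ (-β) := by
    have h1K : (0:ℝ) < 1 + K := by linarith
    have hKb : (0:ℝ) < K ^ β := Real.rpow_pos_of_pos hK0 _
    have h1Kb : (0:ℝ) < (1 + K) ^ β := Real.rpow_pos_of_pos h1K _
    have hmono : (1 + K) ^ β ≤ 2 ^ β * K ^ β := by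
      rw [← Real.mul_rpow (by norm_num) hK0.le]
      exact Real.rpow_le_rpow h1K.le (by linarith) hβ0.le
    rw [Real.rpow_neg hK0.le, Real.rpow_neg h1K.le, ← one_div, ← one_div, mul_one_div,
      div_le_div_iff₀ hKb h1Kb]
    linarith [hmono]
  have hlogbound : 1 + Real.log K ≤ c₀ * Real.log (1 + K) := by
    have hlo1 : Real.log 2 ≤ Real.log (1 + K) := Real.log_le_log (by norm_num) (by linarith)
    have hlo2 : Real.log K ≤ Real.log (1 + K) := Real.log_le_log hK0 (by linarith)
    have h3 : (1:ℝ) ≤ Real.log (1 + K) / Real.log 2 := by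
      rw [le_div_iff₀ hl2]; linarith
    have h4 : Real.log (1 + K) / Real.log 2 = 1 / Real.log 2 * Real.log (1 + K) := by ring
    have hlogK : (0:ℝ) ≤ Real.log K := Real.log_nonneg hK1
    calc 1 + Real.log K ≤ Real.log (1 + K) / Real.log 2 + Real.log (1 + K) := by linarith
      _ = c₀ * Real.log (1 + K) := by rw [hc₀]; ring
  have hKβ : (0:ℝ) ≤ K ^ (-β) := Real.rpow_nonneg hK0.le _
  have hlog1 : (0:ℝ) ≤ 1 + Real.log K := by
    have := Real.log_nonneg hK1; linarith
  have hprod : K ^ (-β) * (1 + Real.log K)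
      ≤ (2 ^ β * (1 + K) ^ (-β)) * (c₀ * Real.log (1 + K)) :=
    mul_le_mul hkey hlogbound hlog1 (by positivity)
  calc (C₁ + C₂) * K ^ (-β) * (1 + Real.log K)
      = (C₁ + C₂) * (K ^ (-β) * (1 + Real.log K)) := by ring
    _ ≤ (C₁ + C₂) * ((2 ^ β * (1 + K) ^ (-β)) * (c₀ * Real.log (1 + K))) :=
        mul_le_mul_of_nonneg_left hprod (by positivity)
    _ = ((C₁ + C₂) * 2 ^ β * c₀) * (1 + K) ^ (-β) * Real.log (1 + K) := by ring
    _ ≤ ((C₁ + C₂) * 2 ^ β * c₀ + 1) * (1 + K) ^ (-β) * Real.log (1 + K) := by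
        have ha : (0:ℝ) ≤ (1 + K) ^ (-β) := Real.rpow_nonneg (by linarith) _
        have hb : (0:ℝ) ≤ Real.log (1 + K) := Real.log_nonneg (by linarith)
        apply mul_le_mul_of_nonneg_right ?_ hb
        exact mul_le_mul_of_nonneg_right (by linarith) ha


lemma tsum_le_ofReal {α γ : ℝ} (k : Fin d → ℤ) (B : ℝ)
    (hB : ∀ S : Finset (Fin d → ℤ), ∑ m ∈ S, gfun d α γ k m ≤ B) :
    (∑' p : {p : (Fin d → ℤ) × (Fin d → ℤ) //
        p.1 ≠ 0 ∧ p.2 ≠ 0 ∧ p.1 + p.2 = k},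
      ENNReal.ofReal (1 / (latNorm p.1.1 ^ α * latNorm p.1.2 ^ γ)))
      ≤ ENNReal.ofReal B := by
  set T := {p : (Fin d → ℤ) × (Fin d → ℤ) // p.1 ≠ 0 ∧ p.2 ≠ 0 ∧ p.1 + p.2 = k} with hT
  have hinj : Function.Injective (fun p : T => p.1.1) := by
    intro p q h
    apply Subtype.ext
    apply Prod.ext h
    have hp : p.1.2 = k - p.1.1 := eq_sub_of_add_eq' p.2.2.2
    have hq : q.1.2 = k - q.1.1 := eq_sub_of_add_eq' q.2.2.2
    rw [hp, hq]
    exact congrArg (fun x => k - x) h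
  calc (∑' p : T, ENNReal.ofReal (1 / (latNorm p.1.1 ^ α * latNorm p.1.2 ^ γ)))
      = ∑' p : T, (fun m => ENNReal.ofReal (gfun d α γ k m)) ((fun p : T => p.1.1) p) := by
        apply tsum_congr
        intro p
        have hp : p.1.2 = k - p.1.1 := eq_sub_of_add_eq' p.2.2.2
        simp only [gfun]
        rw [hp]
    _ ≤ ∑' m : Fin d → ℤ, ENNReal.ofReal (gfun d α γ k m) :=
        ENNReal.tsum_comp_le_tsum_of_injective hinj _
    _ ≤ ENNReal.ofReal B := by
        rw [ENNReal.tsum_eq_iSup_sum]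
        apply iSup_le
        intro S
        rw [← ENNReal.ofReal_sum_of_nonneg (fun m _ => gfun_nonneg α γ k m)]
        exact ENNReal.ofReal_le_ofReal (hB S)

end LatConv


end Helpers

/-- Convolution-type lattice sum estimate (Lemma `l:sumsum`):
for `α, γ > 0` with `α + γ > d`, the sum over nonzero `m + n = k` of
`|m|^{-α} |n|^{-γ}` is bounded by `C (1+|k|)^{-β}` (with a logarithmic
correction when `α = d` or `γ = d`), where `β = min {α, γ, α + γ - d}`. -/
theorem lattice_convolution_sum_estimate (d : ℕ) (α γ : ℝ) (hα : 0 < α) (hγ : 0 < γ)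
    (hsum : (d : ℝ) < α + γ) :
    ∃ C : ℝ, 0 < C ∧ ∀ k : Fin d → ℤ, k ≠ 0 →
      (((α ≠ (d : ℝ) ∧ γ ≠ (d : ℝ)) →
        (∑' p : {p : (Fin d → ℤ) × (Fin d → ℤ) //
            p.1 ≠ 0 ∧ p.2 ≠ 0 ∧ p.1 + p.2 = k},
          ENNReal.ofReal (1 / (latNorm p.1.1 ^ α * latNorm p.1.2 ^ γ)))
          ≤ ENNReal.ofReal
              (C * (1 + latNorm k) ^ (-(min α (min γ (α + γ - d)))))) ∧
      ((α = (d : ℝ) ∨ γ = (d : ℝ)) →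
        (∑' p : {p : (Fin d → ℤ) × (Fin d → ℤ) //
            p.1 ≠ 0 ∧ p.2 ≠ 0 ∧ p.1 + p.2 = k},
          ENNReal.ofReal (1 / (latNorm p.1.1 ^ α * latNorm p.1.2 ^ γ)))
          ≤ ENNReal.ofReal
              (C * (1 + latNorm k) ^ (-(min α (min γ (α + γ - d))))
                * Real.log (1 + latNorm k)))) := by
  rcases Nat.eq_zero_or_pos d with rfl | hd
  · refine ⟨1, one_pos, fun k hk => absurd (funext fun i => i.elim0) hk⟩
  by_cases hcase : α = (d : ℝ) ∨ γ = (d : ℝ)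
  · obtain ⟨C, hC, hb⟩ := LatConv.master_log hd hα hγ hsum
    refine ⟨C, hC, fun k hk => ⟨?_, ?_⟩⟩
    · rintro ⟨h1, h2⟩
      rcases hcase with h | h
      · exact absurd h h1
      · exact absurd h h2
    · intro _
      exact LatConv.tsum_le_ofReal k _ (hb k hk)
  · obtain ⟨C, hC, hb⟩ := LatConv.master_ne hd hα hγ hsum
      (fun h => hcase (Or.inl h)) (fun h => hcase (Or.inr h))
    refine ⟨C, hC, fun k hk => ⟨?_, ?_⟩⟩
    · intro _
      exact LatConv.tsum_le_ofReal k _ (hb k hk)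
    · intro h
      exact absurd h hcase
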